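/- Let φ : ℤ₊ → (0,∞) be nondecreasing, let [a,b] ⊂ ℝ, let c > 1/φ(1)², and let E = E_{a,b,c} ⊂ ℂ denote the open region bounded by the ellipse with foci a and b and major axis [a−c, b+c]. Let V = ⋃_{n≥1} V_n, with V_n ⊂ V_{n+1}, be a family of functions analytic on a neighbourhood of the closure of E, and suppose there is a constant K ≥ 1 such that sup_{z∈E} |f(z)| ≤ K^{φ(deg f)} · max_{x∈[a,b]} |f(x)| for all nonzero f ∈ V (i.e., the generalized Siciak extremal function Φ_{[a,b]}(·; V, φ) is bounded on E). Then there exists a constant C > 0 such that for all n ≥ 1 and all f ∈ V_n, max_{x∈[a,b]} |f′(x)| ≤ C · (φ(n))² · max_{x∈[a,b]} |f(x)|. -/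

import Mathlib

private lemma sq_norm_sinh_add_sq_norm_cosh (w : ℂ) :
    ‖Complex.sinh w‖ ^ 2 + ‖Complex.cosh w‖ ^ 2 = Real.cosh (2 * w.re) := by
  have hp := parallelogram_law_with_norm ℝ (Complex.exp w) (Complex.exp (-w))
  have h1 : ‖Complex.exp w‖ = Real.exp w.re := by
    rw [Complex.norm_exp]
  have h2 : ‖Complex.exp (-w)‖ = Real.exp (-w.re) := by
    rw [Complex.norm_exp, Complex.neg_re]
  rw [h1, h2] at hp
  have hs : Complex.sinh w = (Complex.exp w - Complex.exp (-w)) / 2 := rfl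
  have hc : Complex.cosh w = (Complex.exp w + Complex.exp (-w)) / 2 := rfl
  have e1 : Real.exp (2 * w.re) = Real.exp w.re * Real.exp w.re := by
    rw [← Real.exp_add]; ring_nf
  have e2 : Real.exp (-(2 * w.re)) = Real.exp (-w.re) * Real.exp (-w.re) := by
    rw [← Real.exp_add]; ring_nf
  rw [hs, hc, norm_div, norm_div, Real.cosh_eq, e1, e2]
  have hn2 : ‖(2 : ℂ)‖ = 2 := by norm_num
  rw [hn2]
  ring_nf
  nlinarith [hp]

private lemma norm_cosh_sub_one_add_norm_cosh_add_one (ζ : ℂ) :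
    ‖Complex.cosh ζ - 1‖ + ‖Complex.cosh ζ + 1‖ = 2 * Real.cosh ζ.re := by
  have hm : Complex.cosh ζ = Complex.cosh (ζ / 2) ^ 2 + Complex.sinh (ζ / 2) ^ 2 := by
    have := Complex.cosh_two_mul (ζ / 2)
    rw [show (2 : ℂ) * (ζ / 2) = ζ by ring] at this
    exact this
  have hpyth := Complex.cosh_sq_sub_sinh_sq (ζ / 2)
  have e1 : Complex.cosh ζ - 1 = 2 * Complex.sinh (ζ / 2) ^ 2 := by
    linear_combination hm + hpyth
  have e2 : Complex.cosh ζ + 1 = 2 * Complex.cosh (ζ / 2) ^ 2 := by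
    linear_combination hm - hpyth
  have hre : 2 * (ζ / 2).re = ζ.re := by
    simp [Complex.div_re]
    ring
  have key := sq_norm_sinh_add_sq_norm_cosh (ζ / 2)
  rw [hre] at key
  rw [e1, e2, norm_mul, norm_mul, norm_pow, norm_pow]
  have hn2 : ‖(2 : ℂ)‖ = 2 := by norm_num
  rw [hn2]
  linarith

private lemma exists_cosh_eq_re_nonneg (u : ℂ) :
    ∃ ζ : ℂ, Complex.cosh ζ = u ∧ 0 ≤ ζ.re := by
  obtain ⟨z, hz⟩ := Complex.cos_surjective u
  have hbase : Complex.cosh (z * Complex.I) = u := by rw [Complex.cosh_mul_I]; exact hz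
  rcases le_or_gt 0 (z * Complex.I).re with h | h
  · exact ⟨z * Complex.I, hbase, h⟩
  · exact ⟨-(z * Complex.I), by rw [Complex.cosh_neg]; exact hbase,
      by rw [Complex.neg_re]; linarith⟩

private lemma one_add_sq_half_le_cosh (y : ℝ) (hy : 0 ≤ y) :
    1 + y ^ 2 / 2 ≤ Real.cosh y := by
  have hm : Real.cosh y = Real.cosh (y / 2) ^ 2 + Real.sinh (y / 2) ^ 2 := by
    have := Real.cosh_two_mul (y / 2)
    rw [show (2 : ℝ) * (y / 2) = y by ring] at this
    exact this
  have hs : y / 2 ≤ Real.sinh (y / 2) := Real.self_le_sinh_iff.mpr (by linarith)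
  have hpyth := Real.cosh_sq (y / 2)
  nlinarith [hs]

/-- The degree of a function `f` relative to an increasing family `V` of sets of
functions: the least `n ≥ 1` with `f ∈ V n`. -/
noncomputable def degV (V : ℕ → Set (ℂ → ℂ)) (f : ℂ → ℂ) : ℕ :=
  sInf {n : ℕ | 1 ≤ n ∧ f ∈ V n}

set_option maxHeartbeats 2000000 in
theorem markov_from_bounded_extremal (φ : ℕ → ℝ) (hφpos : ∀ n, 0 < φ n)
    (hφmono : Monotone φ) (a b : ℝ) (hab : a < b) (c : ℝ) (hc : 1 / (φ 1) ^ 2 < c)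
    (V : ℕ → Set (ℂ → ℂ)) (hmono : ∀ n, V n ⊆ V (n + 1))
    (hanal : ∀ n, ∀ f ∈ V n, ∃ U : Set ℂ, IsOpen U ∧
      closure {z : ℂ | ‖z - (a : ℂ)‖ + ‖z - (b : ℂ)‖ < (b - a) + 2 * c} ⊆ U ∧
      DifferentiableOn ℂ f U)
    (K : ℝ) (hK : 1 ≤ K)
    (hbound : ∀ f : ℂ → ℂ, (∃ n, 1 ≤ n ∧ f ∈ V n) → f ≠ 0 →
      ∀ z ∈ {z : ℂ | ‖z - (a : ℂ)‖ + ‖z - (b : ℂ)‖ < (b - a) + 2 * c},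
        ‖f z‖ ≤ K ^ φ (degV V f) *
          sSup ((fun x : ℝ => ‖f (x : ℂ)‖) '' Set.Icc a b)) :
    ∃ C > (0 : ℝ), ∀ n : ℕ, 1 ≤ n → ∀ f ∈ V n, ∀ x ∈ Set.Icc a b,
      ‖deriv (fun s : ℝ => f (s : ℂ)) x‖ ≤
        C * (φ n) ^ 2 * sSup ((fun y : ℝ => ‖f (y : ℂ)‖) '' Set.Icc a b) := by
  classical
  set E : Set ℂ := {z : ℂ | ‖z - (a : ℂ)‖ + ‖z - (b : ℂ)‖ < (b - a) + 2 * c} with hE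
  clear_value E
  have hφ1 : 0 < φ 1 := hφpos 1
  have hK0 : (0 : ℝ) < K := lt_of_lt_of_le one_pos hK
  have hc0 : 0 < c := lt_trans (by positivity) hc
  set h : ℝ := (b - a) / 2 with hh
  clear_value h
  have hhpos : 0 < h := by rw [hh]; linarith
  set mid : ℝ := (a + b) / 2 with hmid
  clear_value mid
  have hEopen : IsOpen E := by
    rw [hE]
    have : Continuous fun z : ℂ => ‖z - (a : ℂ)‖ + ‖z - (b : ℂ)‖ := by continuity
    exact isOpen_lt this continuous_const
  -- choose s₀
  obtain ⟨s₀, hs₀pos, hs₀⟩ : ∃ s₀ : ℝ, 0 < s₀ ∧ h * (Real.cosh s₀ - 1) < c := by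
    have hcont : Continuous fun s : ℝ => h * (Real.cosh s - 1) := by continuity
    have hS : IsOpen {s : ℝ | h * (Real.cosh s - 1) < c} := isOpen_lt hcont continuous_const
    have h0 : (0 : ℝ) ∈ {s : ℝ | h * (Real.cosh s - 1) < c} := by
      simp [Real.cosh_zero, hc0]
    obtain ⟨ε, hε, hball⟩ := Metric.isOpen_iff.mp hS 0 h0
    refine ⟨ε / 2, by linarith, hball ?_⟩
    show dist (ε / 2) 0 < ε
    rw [Real.dist_eq, sub_zero, abs_of_pos (by linarith : (0:ℝ) < ε / 2)]
    linarith
  have hs₀ne : s₀ ≠ 0 := hs₀pos.ne'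
  -- the conformal map
  set ψ : ℂ → ℂ := fun z => (mid : ℂ) + (h : ℂ) * Complex.cosh ((s₀ : ℂ) * z) with hψ
  clear_value ψ
  have hψd : Differentiable ℂ ψ := by
    rw [hψ]
    exact (differentiable_const _).add ((differentiable_const _).mul
      (Complex.differentiable_cosh.comp ((differentiable_const _).mul differentiable_id)))
  have hψsum : ∀ z : ℂ, ‖ψ z - (a : ℂ)‖ + ‖ψ z - (b : ℂ)‖ = 2 * h * Real.cosh (s₀ * z.re) := by
    intro z
    have hre : ((s₀ : ℂ) * z).re = s₀ * z.re := by
      rw [Complex.re_ofReal_mul]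
    have ha' : ψ z - (a : ℂ) = (h : ℂ) * (Complex.cosh ((s₀ : ℂ) * z) + 1) := by
      rw [hψ, hh, hmid]; push_cast; ring
    have hb' : ψ z - (b : ℂ) = (h : ℂ) * (Complex.cosh ((s₀ : ℂ) * z) - 1) := by
      rw [hψ, hh, hmid]; push_cast; ring
    have hnh : ‖(h : ℂ)‖ = h := by
      rw [Complex.norm_real, Real.norm_eq_abs, abs_of_pos hhpos]
    rw [ha', hb', norm_mul, norm_mul, hnh]
    have := norm_cosh_sub_one_add_norm_cosh_add_one ((s₀ : ℂ) * z)
    rw [hre] at this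
    linear_combination h * this
  have hEsub : ∀ z : ℂ, z.re ∈ Set.Icc (0 : ℝ) 1 → ψ z ∈ E := by
    intro z hz
    have hcle : Real.cosh (s₀ * z.re) ≤ Real.cosh s₀ := by
      rw [Real.cosh_le_cosh]
      rw [abs_of_nonneg (mul_nonneg hs₀pos.le hz.1), abs_of_pos hs₀pos]
      calc s₀ * z.re ≤ s₀ * 1 := mul_le_mul_of_nonneg_left hz.2 hs₀pos.le
        _ = s₀ := mul_one s₀
    rw [hE]
    show ‖ψ z - (a : ℂ)‖ + ‖ψ z - (b : ℂ)‖ < (b - a) + 2 * c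
    rw [hψsum z]
    have hmul : h * Real.cosh (s₀ * z.re) ≤ h * Real.cosh s₀ :=
      mul_le_mul_of_nonneg_left hcle hhpos.le
    have hring : h * Real.cosh s₀ = h * (Real.cosh s₀ - 1) + h := by ring
    have h2h : 2 * h = b - a := by rw [hh]; ring
    linarith
  have hIccE : ∀ y : ℝ, y ∈ Set.Icc a b → (y : ℂ) ∈ E := by
    intro y hy
    rw [hE]
    show ‖(y : ℂ) - (a : ℂ)‖ + ‖(y : ℂ) - (b : ℂ)‖ < (b - a) + 2 * c
    have h1 : ‖(y : ℂ) - (a : ℂ)‖ = y - a := by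
      rw [← Complex.ofReal_sub, Complex.norm_real, Real.norm_eq_abs, abs_of_nonneg (by linarith [hy.1])]
    have h2 : ‖(y : ℂ) - (b : ℂ)‖ = b - y := by
      rw [← Complex.ofReal_sub, Complex.norm_real, Real.norm_eq_abs, abs_of_nonpos (by linarith [hy.2])]
      ring
    rw [h1, h2]; linarith
  refine ⟨2 * K ^ (φ 1) / (h * s₀ ^ 2 * (φ 1) ^ 2), ?_, ?_⟩
  · have hKr : 0 < K ^ (φ 1) := Real.rpow_pos_of_pos hK0 _
    apply div_pos (by linarith)
    have := pow_pos hs₀pos 2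
    have := pow_pos hφ1 2
    positivity
  intro n hn f hf x hx
  by_cases hf0 : f = 0
  · subst hf0
    have himg : (fun y : ℝ => ‖(0 : ℂ → ℂ) (y : ℂ)‖) '' Set.Icc a b = {0} := by
      have hfun : (fun y : ℝ => ‖(0 : ℂ → ℂ) (y : ℂ)‖) = fun _ => (0 : ℝ) := by
        funext y; simp
      rw [hfun]
      exact Set.Nonempty.image_const (Set.nonempty_Icc.mpr hab.le) _
    rw [himg, csSup_singleton, mul_zero]
    have hder : deriv (fun s : ℝ => (0 : ℂ → ℂ) (s : ℂ)) x = 0 := by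
      simp [Pi.zero_apply]
    rw [hder, norm_zero]
  obtain ⟨U, hUopen, hclU, hfU⟩ := hanal n f hf
  have hEU : E ⊆ U := subset_trans subset_closure hclU
  set M := sSup ((fun y : ℝ => ‖f (y : ℂ)‖) '' Set.Icc a b) with hM
  clear_value M
  have hfc : ContinuousOn (fun y : ℝ => ‖f (y : ℂ)‖) (Set.Icc a b) :=
    ((hfU.continuousOn.comp Complex.continuous_ofReal.continuousOn
      (fun y hy => hEU (hIccE y hy))).norm)
  have hbdd : BddAbove ((fun y : ℝ => ‖f (y : ℂ)‖) '' Set.Icc a b) :=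
    (isCompact_Icc.image_of_continuousOn hfc).bddAbove
  have hM0 : 0 ≤ M := by
    rw [hM]
    exact le_trans (norm_nonneg (f (a : ℂ)))
      (le_csSup hbdd ⟨a, Set.left_mem_Icc.mpr hab.le, rfl⟩)
  have hmem : ∃ m, 1 ≤ m ∧ f ∈ V m := ⟨n, hn, hf⟩
  have hdeg : φ (degV V f) ≤ φ n := hφmono (Nat.sInf_le ⟨hn, hf⟩)
  have hKφ : K ^ φ (degV V f) ≤ K ^ φ n := Real.rpow_le_rpow_of_exponent_le hK hdeg
  have hfE : ∀ z ∈ E, ‖f z‖ ≤ K ^ (φ n) * M := by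
    intro z hz
    rw [hM]
    refine le_trans (hbound f hmem hf0 z hz) ?_
    rw [← hM]
    exact mul_le_mul_of_nonneg_right hKφ hM0
  by_cases hMz : M = 0
  · have hfzero : ∀ᶠ s : ℝ in nhds x, f (s : ℂ) = 0 := by
      have hxE : (x : ℂ) ∈ E := hIccE x hx
      have : ∀ᶠ z : ℂ in nhds (x : ℂ), z ∈ E := hEopen.eventually_mem hxE
      have hcont := Complex.continuous_ofReal.tendsto x
      filter_upwards [hcont.eventually this] with s hs
      have := hfE _ hs
      rw [hMz, mul_zero] at this
      exact norm_le_zero_iff.mp this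
    have hder : deriv (fun s : ℝ => f (s : ℂ)) x = 0 := by
      have : deriv (fun s : ℝ => f (s : ℂ)) x = deriv (fun _ : ℝ => (0 : ℂ)) x :=
        Filter.EventuallyEq.deriv_eq hfzero
      rw [this, deriv_const]
    rw [hder, norm_zero, hMz, mul_zero]
  have hMpos : 0 < M := lt_of_le_of_ne hM0 (Ne.symm hMz)
  set t : ℝ := φ 1 / φ n with htdef
  clear_value t
  have htpos : 0 < t := by rw [htdef]; exact div_pos hφ1 (hφpos n)
  have ht1 : t ≤ 1 := by rw [htdef]; exact (div_le_one (hφpos n)).mpr (hφmono hn)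
  set r : ℝ := h * s₀ ^ 2 * t ^ 2 / 2 with hrdef
  clear_value r
  have hrpos : 0 < r := by
    rw [hrdef]
    have := pow_pos hs₀pos 2
    have := pow_pos htpos 2
    positivity
  have hrle : r ≤ h * (Real.cosh (s₀ * t) - 1) := by
    have h1 := one_add_sq_half_le_cosh (s₀ * t) (mul_nonneg hs₀pos.le htpos.le)
    have h2 : (s₀ * t) ^ 2 / 2 ≤ Real.cosh (s₀ * t) - 1 := by linarith
    calc r = h * ((s₀ * t) ^ 2 / 2) := by rw [hrdef]; ring
      _ ≤ h * (Real.cosh (s₀ * t) - 1) := mul_le_mul_of_nonneg_left h2 hhpos.le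
  have hst : s₀ * t ≤ s₀ := by
    calc s₀ * t ≤ s₀ * 1 := mul_le_mul_of_nonneg_left ht1 hs₀pos.le
      _ = s₀ := mul_one s₀
  have hcoshle : Real.cosh (s₀ * t) ≤ Real.cosh s₀ := by
    rw [Real.cosh_le_cosh, abs_of_nonneg (mul_nonneg hs₀pos.le htpos.le), abs_of_pos hs₀pos]
    exact hst
  -- sum-of-distances bound on the closed ball
  have hsumw : ∀ w : ℂ, ‖w - (x : ℂ)‖ ≤ r →
      ‖w - (a : ℂ)‖ + ‖w - (b : ℂ)‖ ≤ 2 * h * Real.cosh (s₀ * t) := by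
    intro w hw
    have h1 : ‖w - (a : ℂ)‖ ≤ ‖w - (x : ℂ)‖ + ‖(x : ℂ) - (a : ℂ)‖ := by
      have := norm_sub_le_norm_sub_add_norm_sub w (x : ℂ) (a : ℂ)
      linarith [this]
    have h2 : ‖w - (b : ℂ)‖ ≤ ‖w - (x : ℂ)‖ + ‖(x : ℂ) - (b : ℂ)‖ := by
      have := norm_sub_le_norm_sub_add_norm_sub w (x : ℂ) (b : ℂ)
      linarith [this]
    have hxa : ‖(x : ℂ) - (a : ℂ)‖ = x - a := by
      rw [← Complex.ofReal_sub, Complex.norm_real, Real.norm_eq_abs, abs_of_nonneg (by linarith [hx.1])]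
    have hxb : ‖(x : ℂ) - (b : ℂ)‖ = b - x := by
      rw [← Complex.ofReal_sub, Complex.norm_real, Real.norm_eq_abs, abs_of_nonpos (by linarith [hx.2])]
      ring
    rw [hxa] at h1
    rw [hxb] at h2
    have h2h : 2 * h = b - a := by rw [hh]; ring
    calc ‖w - (a : ℂ)‖ + ‖w - (b : ℂ)‖ ≤ 2 * r + (b - a) := by linarith
      _ ≤ 2 * (h * (Real.cosh (s₀ * t) - 1)) + 2 * h := by linarith
      _ = 2 * h * Real.cosh (s₀ * t) := by ring
  have hballE : ∀ w : ℂ, ‖w - (x : ℂ)‖ ≤ r → w ∈ E := by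
    intro w hw
    rw [hE]
    show ‖w - (a : ℂ)‖ + ‖w - (b : ℂ)‖ < (b - a) + 2 * c
    have hsw := hsumw w hw
    have hmul : h * Real.cosh (s₀ * t) ≤ h * Real.cosh s₀ :=
      mul_le_mul_of_nonneg_left hcoshle hhpos.le
    have hring : h * Real.cosh s₀ = h * (Real.cosh s₀ - 1) + h := by ring
    have h2h : 2 * h = b - a := by rw [hh]; ring
    linarith
  -- the key pointwise bound on the closed ball, via Hadamard three lines
  have hregion : ∀ w : ℂ, ‖w - (x : ℂ)‖ ≤ r → ‖f w‖ ≤ K ^ (φ 1) * M := by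
    intro w hw
    obtain ⟨ζ, hζ, hζre⟩ := exists_cosh_eq_re_nonneg ((w - (mid : ℂ)) / (h : ℂ))
    have hhC : (h : ℂ) ≠ 0 := by
      exact_mod_cast Complex.ofReal_ne_zero.mpr hhpos.ne'
    have hψζ : ψ (ζ / (s₀ : ℂ)) = w := by
      simp only [hψ]
      have hs₀C : (s₀ : ℂ) ≠ 0 := Complex.ofReal_ne_zero.mpr hs₀ne
      rw [show (s₀ : ℂ) * (ζ / (s₀ : ℂ)) = ζ from by field_simp, hζ]
      field_simp
      ring
    have hzre : (ζ / (s₀ : ℂ)).re = ζ.re / s₀ := by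
      rw [show ((s₀ : ℂ)) = ((s₀ : ℝ) : ℂ) from rfl, Complex.div_ofReal_re]
    have hζle : ζ.re ≤ s₀ * t := by
      have hsum := hψsum (ζ / (s₀ : ℂ))
      rw [hψζ, hzre] at hsum
      have hs' : s₀ * (ζ.re / s₀) = ζ.re := by field_simp
      rw [hs'] at hsum
      have hle : Real.cosh ζ.re ≤ Real.cosh (s₀ * t) := by
        have h2 := hsumw w hw
        rw [hsum] at h2
        exact le_of_mul_le_mul_left h2 (by linarith : (0 : ℝ) < 2 * h)
      have := Real.cosh_le_cosh.mp hle
      rw [abs_of_nonneg hζre, abs_of_nonneg (mul_nonneg hs₀pos.le htpos.le)] at this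
      exact this
    set z : ℂ := ζ / (s₀ : ℂ) with hz
    clear_value z
    have hzre0 : 0 ≤ z.re := by
      rw [hzre]
      positivity
    have hzret : z.re ≤ t := by
      rw [hzre, div_le_iff₀ hs₀pos]
      linarith [hζle]
    have hzmem : z ∈ Complex.HadamardThreeLines.verticalClosedStrip 0 1 :=
      ⟨hzre0, le_trans hzret ht1⟩
    -- Hadamard for g = f ∘ ψ
    set g : ℂ → ℂ := fun z => f (ψ z) with hg
    clear_value g
    have hgd : DiffContOnCl ℂ g (Complex.HadamardThreeLines.verticalStrip 0 1) := by
      rw [hg]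
      apply DifferentiableOn.diffContOnCl
      have hsubset : closure (Complex.HadamardThreeLines.verticalStrip 0 1) ⊆
          Complex.HadamardThreeLines.verticalClosedStrip 0 1 := by
        rw [Complex.HadamardThreeLines.verticalClosedStrip, ← closure_Ioo (zero_ne_one),
          ← Complex.closure_preimage_re]
        rfl
      intro w' hw'
      have hw'mem : ψ w' ∈ U := hEU (hEsub w' (hsubset hw'))
      have hd1 : DifferentiableAt ℂ ψ w' := hψd w'
      have hd2 : DifferentiableAt ℂ f (ψ w') := hfU.differentiableAt (hUopen.mem_nhds hw'mem)
      exact (hd2.comp w' hd1).differentiableWithinAt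
    have hB : BddAbove ((norm ∘ g) ''
        Complex.HadamardThreeLines.verticalClosedStrip 0 1) := by
      refine ⟨K ^ (φ n) * M, ?_⟩
      rintro v ⟨z', hz', rfl⟩
      have hz2 : z'.re ∈ Set.Icc (0 : ℝ) 1 := hz'
      simp only [Function.comp_apply, hg]
      exact hfE _ (hEsub z' hz2)
    have hedge0 : ∀ z' ∈ Complex.re ⁻¹' {0}, ‖g z'‖ ≤ M := by
      intro z' hz'
      have hz'0 : z'.re = 0 := hz'
      have hdecomp : (s₀ : ℂ) * z' = ((s₀ * z'.im : ℝ) : ℂ) * Complex.I := by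
        apply Complex.ext <;>
          simp [Complex.mul_re, Complex.mul_im, hz'0]
      have hψz' : ψ z' = ((mid + h * Real.cos (s₀ * z'.im) : ℝ) : ℂ) := by
        simp only [hψ]
        rw [hdecomp, Complex.cosh_mul_I, ← Complex.ofReal_cos]
        push_cast
        ring
      have hmem' : mid + h * Real.cos (s₀ * z'.im) ∈ Set.Icc a b := by
        constructor
        · have h1 := mul_le_mul_of_nonneg_left (Real.neg_one_le_cos (s₀ * z'.im)) hhpos.le
          have hma : mid - h = a := by rw [hmid, hh]; ring
          linarith
        · have h1 := mul_le_mul_of_nonneg_left (Real.cos_le_one (s₀ * z'.im)) hhpos.le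
          have hmb : mid + h = b := by rw [hmid, hh]; ring
          linarith
      simp only [hg]
      rw [hψz', hM]
      exact le_csSup hbdd ⟨_, hmem', rfl⟩
    have hedge1 : ∀ z' ∈ Complex.re ⁻¹' {1}, ‖g z'‖ ≤ K ^ (φ n) * M := by
      intro z' hz'
      have hz'1 : z'.re = 1 := hz'
      simp only [hg]
      exact hfE _ (hEsub z' (by rw [hz'1]; exact ⟨zero_le_one, le_refl 1⟩))
    have hH := Complex.HadamardThreeLines.norm_le_interp_of_mem_verticalClosedStrip' zero_lt_one
      hzmem hgd hB hedge0 hedge1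
    simp only [sub_zero, div_one] at hH
    have hgz : g z = f w := by
      simp only [hg]
      rw [hψζ]
    rw [hgz] at hH
    -- now bound the interpolation expression
    have hKn : (0 : ℝ) < K ^ (φ n) := Real.rpow_pos_of_pos hK0 _
    have hM1 : M ^ (1 - z.re) * M ^ z.re = M := by
      rw [← Real.rpow_add hMpos]
      norm_num
    have hrw : M ^ (1 - z.re) * (K ^ (φ n) * M) ^ z.re = K ^ (φ n * z.re) * M := by
      rw [Real.mul_rpow hKn.le hM0, ← Real.rpow_mul hK0.le]
      calc M ^ (1 - z.re) * (K ^ (φ n * z.re) * M ^ z.re)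
          = K ^ (φ n * z.re) * (M ^ (1 - z.re) * M ^ z.re) := by ring
        _ = K ^ (φ n * z.re) * M := by rw [hM1]
    have hexp : φ n * z.re ≤ φ 1 := by
      have : φ n * z.re ≤ φ n * t := mul_le_mul_of_nonneg_left hzret (hφpos n).le
      rw [htdef] at this
      have h' : φ n * (φ 1 / φ n) = φ 1 := by
        rw [mul_comm]
        exact div_mul_cancel₀ _ (hφpos n).ne'
      linarith [this, h'.le]
    have hfinal : K ^ (φ n * z.re) * M ≤ K ^ (φ 1) * M :=
      mul_le_mul_of_nonneg_right (Real.rpow_le_rpow_of_exponent_le hK hexp) hM0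
    calc ‖f w‖ ≤ M ^ (1 - z.re) * (K ^ (φ n) * M) ^ z.re := hH
      _ = K ^ (φ n * z.re) * M := hrw
      _ ≤ K ^ (φ 1) * M := hfinal
  -- Cauchy estimate
  have hballU : Metric.closedBall (x : ℂ) r ⊆ U := by
    intro w hw
    rw [Metric.mem_closedBall, Complex.dist_eq] at hw
    exact hEU (hballE w (by exact hw))
  have hdball : DiffContOnCl ℂ f (Metric.ball (x : ℂ) r) := by
    apply DifferentiableOn.diffContOnCl
    rw [closure_ball _ hrpos.ne']
    exact hfU.mono hballU
  have hsphere : ∀ w ∈ Metric.sphere (x : ℂ) r, ‖f w‖ ≤ K ^ (φ 1) * M := by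
    intro w hw
    rw [Metric.mem_sphere, Complex.dist_eq] at hw
    exact hregion w (by linarith [hw.le])
  have hcauchy := Complex.norm_deriv_le_of_forall_mem_sphere_norm_le hrpos hdball hsphere
  have hdx : DifferentiableAt ℂ f (x : ℂ) :=
    hfU.differentiableAt (hUopen.mem_nhds (hEU (hIccE x hx)))
  have hreal : deriv (fun s : ℝ => f (s : ℂ)) x = deriv f (x : ℂ) :=
    (hdx.hasDerivAt.comp_ofReal).deriv
  rw [hreal]
  refine le_trans hcauchy (le_of_eq ?_)
  rw [hrdef, htdef]
  have hφn : φ n ≠ 0 := (hφpos n).ne'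
  field_simp
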